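/- Let h: (0,∞) → (0,∞) be a C¹ function satisfying the differential inequality h^{(n+2)/n}(t) · B^{-2/n} ≤ −(C/2) h′(t) + 2C c₁² h(t) for constants B, C, c₁ > 0, with h(t) → ∞ as t → 0⁺. Then for all t > 0, h(t) ≤ (2C)^{n/2} c₁ⁿ (1 − e^{-8tc₁²/n})^{-n/2} B. -/

import Mathlib

open Filter Set

/-- Pure algebra step: dividing the differential inequality by `h^{(n+2)/n}`. -/
lemma heat_kernel_alg (N C c₁ B' H D q r p : ℝ) (hN : 0 < N) (hC : 0 < C)
    (hrp : r * p = 1) (hrH : r * H = q) (hr : 0 < r)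
    (hmain : p * B' ≤ -(C / 2) * D + 2 * C * c₁ ^ 2 * H) :
    4 * B' / (C * N) ≤ 8 * c₁ ^ 2 / N * q + D * (-(2 : ℝ) / N) * r := by
  have h1 : B' ≤ -(C / 2) * (r * D) + 2 * C * c₁ ^ 2 * q := by
    have h0 := mul_le_mul_of_nonneg_left hmain hr.le
    calc B' = r * (p * B') := by rw [← mul_assoc, hrp, one_mul]
      _ ≤ r * (-(C / 2) * D + 2 * C * c₁ ^ 2 * H) := h0
      _ = -(C / 2) * (r * D) + 2 * C * c₁ ^ 2 * (r * H) := by ring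
      _ = -(C / 2) * (r * D) + 2 * C * c₁ ^ 2 * q := by rw [hrH]
  have h2 := mul_le_mul_of_nonneg_left h1 (show (0:ℝ) ≤ 4 / (C * N) by positivity)
  calc 4 * B' / (C * N) = 4 / (C * N) * B' := by ring
    _ ≤ 4 / (C * N) * (-(C / 2) * (r * D) + 2 * C * c₁ ^ 2 * q) := h2
    _ = 8 * c₁ ^ 2 / N * q + D * (-(2 : ℝ) / N) * r := by
        field_simp
        ring

/-- ODE comparison step of the heat-kernel index estimate. -/
theorem heat_kernel_ode_comparison
    (n : ℕ) (hn : 1 ≤ n) (B C c₁ : ℝ) (hB : 0 < B) (hC : 0 < C) (hc₁ : 0 < c₁)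
    (h h' : ℝ → ℝ) (hpos : ∀ t, 0 < t → 0 < h t)
    (hderiv : ∀ t, 0 < t → HasDerivAt h (h' t) t)
    (hineq : ∀ t, 0 < t →
      h t ^ (((n : ℝ) + 2) / n) * B ^ (-(2 : ℝ) / n) ≤
        -(C / 2) * h' t + 2 * C * c₁ ^ 2 * h t)
    (hblow : Tendsto h (nhdsWithin 0 (Ioi 0)) atTop) :
    ∀ t, 0 < t →
      h t ≤ (2 * C) ^ ((n : ℝ) / 2) * c₁ ^ n *
        (1 - Real.exp (-8 * t * c₁ ^ 2 / n)) ^ (-(n : ℝ) / 2) * B := by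
  intro t ht
  have hN0 : (0:ℝ) < (n:ℝ) := by exact_mod_cast Nat.lt_of_lt_of_le Nat.zero_lt_one hn
  set B' : ℝ := B ^ (-(2:ℝ)/(n:ℝ)) with hB'def
  have hB'pos : 0 < B' := Real.rpow_pos_of_pos hB _
  set a : ℝ := 8 * c₁ ^ 2 / (n:ℝ) with hadef
  set k : ℝ := 4 * B' / (C * (n:ℝ)) with hkdef
  have hapos : 0 < a := by positivity
  have hkpos : 0 < k := by positivity
  set φ : ℝ → ℝ := fun u => h u ^ (-(2:ℝ)/(n:ℝ)) with hφdef
  set F : ℝ → ℝ := fun u => Real.exp (a*u) * (φ u - k/a) with hFdef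
  -- derivative of F on (0, ∞)
  have hFderiv : ∀ s, 0 < s → HasDerivAt F
      (Real.exp (a*s) * (a * (φ s - k/a) +
        h' s * (-(2:ℝ)/(n:ℝ)) * h s ^ (-(2:ℝ)/(n:ℝ) - 1))) s := by
    intro s hs
    have hφd : HasDerivAt φ (h' s * (-(2:ℝ)/(n:ℝ)) * h s ^ (-(2:ℝ)/(n:ℝ) - 1)) s :=
      (hderiv s hs).rpow_const (Or.inl (hpos s hs).ne')
    have hexp : HasDerivAt (fun u => Real.exp (a*u)) (Real.exp (a*s) * a) s := by
      simpa using (((hasDerivAt_id s).const_mul a).exp)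
    have := hexp.mul (hφd.sub_const (k/a))
    exact this.congr_deriv (by ring)
  -- the derivative is nonnegative on (0, ∞)
  have hder_nonneg : ∀ s, 0 < s → 0 ≤ Real.exp (a*s) * (a * (φ s - k/a) +
      h' s * (-(2:ℝ)/(n:ℝ)) * h s ^ (-(2:ℝ)/(n:ℝ) - 1)) := by
    intro s hs
    have hH : 0 < h s := hpos s hs
    have hrpos : 0 < h s ^ (-(2:ℝ)/(n:ℝ) - 1) := Real.rpow_pos_of_pos hH _
    have hrp : h s ^ (-(2:ℝ)/(n:ℝ) - 1) * h s ^ (((n:ℝ) + 2) / (n:ℝ)) = 1 := by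
      rw [← Real.rpow_add hH]
      have : (-(2:ℝ)/(n:ℝ) - 1) + ((n:ℝ) + 2) / (n:ℝ) = 0 := by field_simp; ring
      rw [this, Real.rpow_zero]
    have hrH : h s ^ (-(2:ℝ)/(n:ℝ) - 1) * h s = φ s := by
      calc h s ^ (-(2:ℝ)/(n:ℝ) - 1) * h s
          = h s ^ (-(2:ℝ)/(n:ℝ) - 1) * h s ^ (1:ℝ) := by rw [Real.rpow_one]
        _ = h s ^ (-(2:ℝ)/(n:ℝ)) := by rw [← Real.rpow_add hH]; ring_nf
        _ = φ s := rfl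
    have hkey := heat_kernel_alg (n:ℝ) C c₁ B' (h s) (h' s) (φ s)
      (h s ^ (-(2:ℝ)/(n:ℝ) - 1)) (h s ^ (((n:ℝ) + 2) / (n:ℝ)))
      hN0 hC hrp hrH hrpos (hineq s hs)
    have h3 : 0 ≤ a * (φ s - k/a) +
        h' s * (-(2:ℝ)/(n:ℝ)) * h s ^ (-(2:ℝ)/(n:ℝ) - 1) := by
      have hak : a * (k/a) = k := by field_simp
      have : k ≤ a * φ s + h' s * (-(2:ℝ)/(n:ℝ)) * h s ^ (-(2:ℝ)/(n:ℝ) - 1) := by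
        calc k = 4 * B' / (C * (n:ℝ)) := rfl
          _ ≤ 8 * c₁ ^ 2 / (n:ℝ) * φ s +
              h' s * (-(2:ℝ)/(n:ℝ)) * h s ^ (-(2:ℝ)/(n:ℝ) - 1) := hkey
          _ = a * φ s + h' s * (-(2:ℝ)/(n:ℝ)) * h s ^ (-(2:ℝ)/(n:ℝ) - 1) := by
              rw [hadef]
      nlinarith [this, hak]
    positivity
  -- F is monotone on (0, ∞)
  have hmono : MonotoneOn F (Ioi (0:ℝ)) := by
    apply monotoneOn_of_hasDerivWithinAt_nonneg (convex_Ioi 0)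
      (f' := fun s => Real.exp (a*s) * (a * (φ s - k/a) +
        h' s * (-(2:ℝ)/(n:ℝ)) * h s ^ (-(2:ℝ)/(n:ℝ) - 1)))
    · intro s hs
      exact ((hFderiv s hs).differentiableAt.continuousAt).continuousWithinAt
    · intro s hs
      rw [interior_Ioi] at hs
      exact (hFderiv s hs).hasDerivWithinAt
    · intro s hs
      rw [interior_Ioi] at hs
      exact hder_nonneg s hs
  -- limit of F at 0⁺
  have hlim : Tendsto F (nhdsWithin 0 (Ioi 0)) (nhds (1 * (0 - k/a))) := by
    apply Tendsto.mul
    · have : Tendsto (fun u => Real.exp (a*u)) (nhds (0:ℝ)) (nhds (Real.exp (a*0))) :=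
        (Real.continuous_exp.comp (continuous_const.mul continuous_id)).tendsto 0
      simpa using this.mono_left nhdsWithin_le_nhds
    · apply Tendsto.sub_const
      have h2N : (0:ℝ) < 2/(n:ℝ) := by positivity
      have := (tendsto_rpow_neg_atTop h2N).comp hblow
      simpa [hφdef, Function.comp_def, neg_div] using this
  -- conclude F t ≥ -k/a
  have hFt : 1 * (0 - k/a) ≤ F t := by
    apply le_of_tendsto hlim
    filter_upwards [Ioo_mem_nhdsGT_of_mem (show (0:ℝ) ∈ Ico 0 t from ⟨le_refl 0, ht⟩)]
      with s hs
    exact hmono hs.1 ht hs.2.le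
  -- lower bound for φ t
  have hφlow : k/a * (1 - Real.exp (-(a*t))) ≤ φ t := by
    have hE : (0:ℝ) < Real.exp (a*t) := Real.exp_pos _
    have hEi : Real.exp (a*t) * Real.exp (-(a*t)) = 1 := by
      rw [← Real.exp_add]; simp
    have hFt' : -(k/a) ≤ Real.exp (a*t) * (φ t - k/a) := by
      simpa using hFt
    have h4 := mul_le_mul_of_nonneg_left hFt' (Real.exp_pos (-(a*t))).le
    have h5 : Real.exp (-(a*t)) * (Real.exp (a*t) * (φ t - k/a)) = φ t - k/a := by
      rw [← mul_assoc, mul_comm (Real.exp (-(a*t))), hEi, one_mul]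
    rw [h5] at h4
    nlinarith [h4]
  -- positivity of the lower bound
  have hexplt : Real.exp (-(a*t)) < 1 := by
    rw [Real.exp_lt_one_iff]
    nlinarith [mul_pos hapos ht]
  have hMpos : 0 < 1 - Real.exp (-(a*t)) := by linarith
  have hlow_pos : 0 < k/a * (1 - Real.exp (-(a*t))) :=
    mul_pos (div_pos hkpos hapos) hMpos
  -- rewrite h t via φ t
  have hht : (φ t) ^ (-(n:ℝ)/2) = h t := by
    rw [hφdef]
    rw [← Real.rpow_mul (hpos t ht).le]
    have : (-(2:ℝ)/(n:ℝ)) * (-(n:ℝ)/2) = 1 := by field_simp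
    rw [this, Real.rpow_one]
  have hz : (-(n:ℝ)/2) ≤ 0 := by nlinarith [hN0]
  have hstep : h t ≤ (k/a * (1 - Real.exp (-(a*t)))) ^ (-(n:ℝ)/2) := by
    rw [← hht]
    exact Real.rpow_le_rpow_of_nonpos hlow_pos hφlow hz
  -- identify the exponential
  have hMeq : (1 - Real.exp (-(a*t))) = 1 - Real.exp (-8 * t * c₁ ^ 2 / (n:ℝ)) := by
    have : -(a*t) = -8 * t * c₁ ^ 2 / (n:ℝ) := by rw [hadef]; ring
    rw [this]
  -- compute (k/a)^(-(n)/2)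
  have hka : k/a = B' / (2 * C * c₁ ^ 2) := by
    rw [hkdef, hadef]
    field_simp
    ring
  have hB'exp : B' ^ (-(n:ℝ)/2) = B := by
    rw [hB'def, ← Real.rpow_mul hB.le]
    have : (-(2:ℝ)/(n:ℝ)) * (-(n:ℝ)/2) = 1 := by field_simp
    rw [this, Real.rpow_one]
  have hc₁exp : ((c₁:ℝ) ^ 2) ^ ((n:ℝ)/2) = c₁ ^ n := by
    rw [← Real.rpow_natCast c₁ 2, ← Real.rpow_mul hc₁.le, ← Real.rpow_natCast c₁ n]
    congr 1
    push_cast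
    ring
  have hdenexp : (2 * C * c₁ ^ 2) ^ (-(n:ℝ)/2) =
      ((2 * C) ^ ((n:ℝ)/2) * c₁ ^ n)⁻¹ := by
    have h1 : -(n:ℝ)/2 = -((n:ℝ)/2) := by ring
    rw [h1, Real.rpow_neg (by positivity)]
    congr 1
    rw [Real.mul_rpow (by positivity) (by positivity), hc₁exp]
  calc h t ≤ (k/a * (1 - Real.exp (-(a*t)))) ^ (-(n:ℝ)/2) := hstep
    _ = (k/a) ^ (-(n:ℝ)/2) * (1 - Real.exp (-(a*t))) ^ (-(n:ℝ)/2) :=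
        Real.mul_rpow (div_pos hkpos hapos).le hMpos.le
    _ = (2 * C) ^ ((n : ℝ) / 2) * c₁ ^ n *
        (1 - Real.exp (-8 * t * c₁ ^ 2 / (n:ℝ))) ^ (-(n : ℝ) / 2) * B := by
        rw [hMeq, hka, Real.div_rpow hB'pos.le (by positivity), hB'exp, hdenexp]
        rw [div_eq_mul_inv, inv_inv]
        ring
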